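/- arXiv:1811.04538 — 2 statements merged into one kernel-verified Lean document; each statement's English description precedes it below -/
import Mathlib

section
/- Let L be a field with a valuation ν extending the q-adic valuation on K = κ((q)) (κ a field), and suppose L = T(q^{1/m}) where T/K is unramified. If a K-derivation D extends ν-integrally to T and D(q^{1/m}) = 0, then the unique extension of D to L is ν-integral, i.e., ν(D(s)) ≥ ν(s) for all s ∈ L. -/
/-- Let `L` be a valued field (valuation recorded multiplicatively as a
nonarchimedean absolute value `v`, so that `ν(a) ≥ ν(b)` corresponds to `v a ≤ v b`),
`T ⊆ L` a subfield, `u ∈ L` (playing the role of `q^{1/m}`) and `m ≥ 1`, such that every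
element `s` of `L` can be written `s = ∑_{i<m} tᵢ uⁱ` with `tᵢ ∈ T` and, the terms having
pairwise distinct valuations, `v (tᵢ uⁱ) ≤ v s` for all `i`.  If the derivation `D`
is `ν`-integral on `T` and kills `u`, then `D` is `ν`-integral on all of `L`. -/
theorem derivation_integral_on_tame_extension
    (L : Type*) [Field L] (v : AbsoluteValue L ℝ)
    (hna : ∀ a b : L, v (a + b) ≤ max (v a) (v b))
    (T : Subfield L) (u : L) (m : ℕ) (hm : 1 ≤ m)
    (D : L → L)
    (hadd : ∀ a b : L, D (a + b) = D a + D b)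
    (hmul : ∀ a b : L, D (a * b) = a * D b + b * D a)
    (hDT : ∀ t ∈ T, D t ∈ T)
    (hint : ∀ t ∈ T, v (D t) ≤ v t)
    (hDu : D u = 0)
    (hdecomp : ∀ s : L, ∃ t : Fin m → L,
      (∀ i, t i ∈ T) ∧ s = ∑ i : Fin m, t i * u ^ (i : ℕ) ∧
      ∀ i : Fin m, v (t i * u ^ (i : ℕ)) ≤ v s) :
    ∀ s : L, v (D s) ≤ v s := by
  have hD1 : D 1 = 0 := by
    have h := hmul 1 1
    rw [mul_one] at h
    linear_combination -h
  have hDpow : ∀ n : ℕ, D (u ^ n) = 0 := by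
    intro n
    induction n with
    | zero => simpa using hD1
    | succ k ih =>
      rw [pow_succ, hmul, ih, hDu]
      ring
  have hDsum : ∀ (f : Fin m → L), D (∑ i, f i) = ∑ i, D (f i) := by
    intro f
    have h0 : D 0 = 0 := by
      have h := hadd 0 0
      rw [add_zero] at h
      linear_combination -h
    classical
    induction (Finset.univ : Finset (Fin m)) using Finset.induction with
    | empty => simpa using h0
    | insert _ _ hx ih =>
      rw [Finset.sum_insert hx, Finset.sum_insert hx, hadd, ih]
  intro s
  obtain ⟨t, htT, hsum, hle⟩ := hdecomp s
  have hDs : D s = ∑ i : Fin m, u ^ (i : ℕ) * D (t i) := by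
    rw [hsum, hDsum]
    congr 1
    funext i
    rw [hmul, hDpow]
    ring
  rw [hDs]
  -- bound v of a finite sum by max of bounds
  have key : ∀ (F : Finset (Fin m)), v (∑ i ∈ F, u ^ (i : ℕ) * D (t i)) ≤ max 0 (v s) := by
    intro F
    classical
    induction F using Finset.induction with
    | empty => simp
    | @insert a F' hx ih =>
      rw [Finset.sum_insert hx]
      refine le_trans (hna _ _) (max_le ?_ ih)
      have h1 : v (u ^ (a : ℕ) * D (t a)) ≤ v (t a * u ^ (a : ℕ)) := by
        rw [v.map_mul, v.map_mul, mul_comm (v (t a))]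
        exact mul_le_mul_of_nonneg_left (hint _ (htT a)) (v.nonneg _)
      exact le_trans (h1.trans (hle a)) (le_max_right _ _)
  have := key Finset.univ
  have hvs : (0 : ℝ) ≤ v s := v.nonneg s
  simpa [max_eq_right hvs] using this
end

section
/- Let σ: G → GL_r(ℂ) and τ: G → GL_r(ℂ[q]/(q^{m+1})) be representations of a group G with τ ≡ σ mod q^m, and suppose τ is conjugate to σ by some A ∈ GL_r(ℂ[q]/(q^{m+1})). Then there exists a matrix M ∈ M_r(ℂ) such that (I + q^m M)⁻¹ τ (I + q^m M) = σ. -/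
open Polynomial

noncomputable section

/-- `ℂ[q]/(q^m)` -/
abbrev QuotRing (m : ℕ) : Type :=
  Polynomial ℂ ⧸ Ideal.span {(Polynomial.X : Polynomial ℂ) ^ m}


/-- the class of `q^k` in `ℂ[q]/(q^m)` -/
def qpow (m k : ℕ) : QuotRing m :=
  Ideal.Quotient.mk _ ((Polynomial.X : Polynomial ℂ) ^ k)

/-- reduction `ℂ[q]/(q^{m+1}) → ℂ[q]/(q^m)` -/
def redQuot (m : ℕ) : QuotRing (m + 1) →+* QuotRing m :=
  Ideal.Quotient.factor
    (Ideal.span_singleton_le_span_singleton.mpr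
      (pow_dvd_pow (Polynomial.X : Polynomial ℂ) (Nat.le_succ m)))

namespace S18

/-- the quotient map -/
abbrev mkq (n : ℕ) : Polynomial ℂ →+* QuotRing n := Ideal.Quotient.mk _

lemma mkq_eq_mkq {n : ℕ} {p q : ℂ[X]} (h : X ^ n ∣ p - q) : mkq n p = mkq n q := by
  rw [Ideal.Quotient.eq]
  exact Ideal.mem_span_singleton.mpr h

lemma algebraMap_eq (n : ℕ) (c : ℂ) : algebraMap ℂ (QuotRing n) c = mkq n (C c) := by
  rw [IsScalarTower.algebraMap_apply ℂ ℂ[X] (QuotRing n)]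
  rfl

/-- evaluation at 0 -/
def ev0 (m : ℕ) : QuotRing (m+1) →+* ℂ :=
  Ideal.Quotient.lift _ (Polynomial.evalRingHom 0) (by
    intro a ha
    obtain ⟨c, rfl⟩ := Ideal.mem_span_singleton.mp ha
    simp)

lemma ev0_mkq (m : ℕ) (p : ℂ[X]) : ev0 m (mkq (m+1) p) = p.coeff 0 := by
  rw [Polynomial.coeff_zero_eq_eval_zero]
  rfl

lemma redQuot_mkq (m : ℕ) (p : ℂ[X]) : redQuot m (mkq (m+1) p) = mkq m p :=
  Ideal.Quotient.factor_mk _ _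

lemma qpow_mul (m : ℕ) (x : QuotRing (m+1)) :
    qpow (m+1) m * x = qpow (m+1) m * algebraMap ℂ _ (ev0 m x) := by
  obtain ⟨p, rfl⟩ := Ideal.Quotient.mk_surjective x
  rw [ev0_mkq, algebraMap_eq]
  show mkq (m+1) (X^m * p) = mkq (m+1) (X^m * C (p.coeff 0))
  apply mkq_eq_mkq
  rw [← mul_sub, pow_succ]
  have hx : (X : ℂ[X]) ∣ (p - C (p.coeff 0)) := by
    rw [X_dvd_iff, coeff_sub, coeff_C_zero, sub_self]
  exact mul_dvd_mul_left _ hx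

lemma qpow_mul_qpow (m : ℕ) (hm : 1 ≤ m) :
    qpow (m+1) m * qpow (m+1) m = (0 : QuotRing (m+1)) := by
  show mkq (m+1) (X^m * X^m) = 0
  rw [Ideal.Quotient.eq_zero_iff_mem]
  exact Ideal.mem_span_singleton.mpr (by rw [← pow_add]; exact pow_dvd_pow _ (by omega))

lemma ev0_section (x : QuotRing 1) : algebraMap ℂ (QuotRing 1) (ev0 0 x) = x := by
  obtain ⟨p, rfl⟩ := Ideal.Quotient.mk_surjective x
  rw [ev0_mkq, algebraMap_eq]
  apply mkq_eq_mkq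
  rw [pow_one, X_dvd_iff, coeff_sub, coeff_C_zero, sub_self]

variable {r : ℕ}

/-- coefficient matrix -/
def coefM (Q : Matrix (Fin r) (Fin r) ℂ[X]) (t : ℕ) : Matrix (Fin r) (Fin r) ℂ :=
  fun i j => (Q i j).coeff t

lemma coeff_mul_right (Q : Matrix (Fin r) (Fin r) ℂ[X]) (S : Matrix (Fin r) (Fin r) ℂ)
    (t : ℕ) (i j : Fin r) :
    ((Q * S.map C) i j).coeff t = (coefM Q t * S) i j := by
  simp [Matrix.mul_apply, coefM, finset_sum_coeff, Matrix.map_apply, coeff_mul_C]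

lemma coeff_mul_left (Q : Matrix (Fin r) (Fin r) ℂ[X]) (S : Matrix (Fin r) (Fin r) ℂ)
    (t : ℕ) (i j : Fin r) :
    ((S.map C * Q) i j).coeff t = (S * coefM Q t) i j := by
  simp [Matrix.mul_apply, coefM, finset_sum_coeff, Matrix.map_apply, coeff_C_mul]

lemma mul_map_C_comm (Q : Matrix (Fin r) (Fin r) ℂ[X]) (S : Matrix (Fin r) (Fin r) ℂ)
    (h : ∀ t, coefM Q t * S = S * coefM Q t) :
    Q * S.map C = S.map C * Q := by
  ext i j t
  rw [coeff_mul_right, coeff_mul_left, h t]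

lemma comm_of_red (m : ℕ) (Q : Matrix (Fin r) (Fin r) ℂ[X]) (S : Matrix (Fin r) (Fin r) ℂ)
    (h : (Q * S.map C).map (mkq m) = (S.map C * Q).map (mkq m)) :
    ∀ t < m, coefM Q t * S = S * coefM Q t := by
  intro t ht
  ext i j
  have h1 : mkq m ((Q * S.map C) i j) = mkq m ((S.map C * Q) i j) := by
    have := congrFun (congrFun h i) j
    simpa [Matrix.map_apply] using this
  have h2 : (X : ℂ[X]) ^ m ∣ ((Q * S.map C) i j - (S.map C * Q) i j) :=
    Ideal.mem_span_singleton.mp (Ideal.Quotient.eq.mp h1)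
  have h3 := (X_pow_dvd_iff.mp h2) t ht
  rw [coeff_sub, sub_eq_zero, coeff_mul_right, coeff_mul_left] at h3
  exact h3

lemma coefM_modByMonic_lt (Q : Matrix (Fin r) (Fin r) ℂ[X]) (m t : ℕ) (ht : t < m) :
    coefM (Q.map (· %ₘ X ^ m)) t = coefM Q t := by
  ext i j
  simp only [coefM, Matrix.map_apply]
  conv_rhs => rw [← modByMonic_add_div (Q i j) (X ^ m)]
  rw [coeff_add, coeff_X_pow_mul', if_neg (by omega), add_zero]

lemma coefM_modByMonic_ge (Q : Matrix (Fin r) (Fin r) ℂ[X]) (m t : ℕ) (ht : m ≤ t) :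
    coefM (Q.map (· %ₘ X ^ m)) t = 0 := by
  ext i j
  simp only [coefM, Matrix.map_apply, Matrix.zero_apply]
  apply coeff_eq_zero_of_degree_lt
  exact lt_of_lt_of_le (degree_modByMonic_lt _ (monic_X_pow m))
    (by simpa [degree_X_pow] using (Nat.cast_le (α := WithBot ℕ)).mpr ht)

lemma sandwich (m : ℕ) (hm : 1 ≤ m) {r : ℕ} (W Z W' : Matrix (Fin r) (Fin r) (QuotRing (m+1))) :
    (qpow (m+1) m • W) * (Z * (qpow (m+1) m • W')) = 0 := by
  ext i j
  simp only [Matrix.mul_apply, Matrix.smul_apply, Matrix.zero_apply, smul_eq_mul]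
  apply Finset.sum_eq_zero
  intro k _
  rw [Finset.mul_sum]
  apply Finset.sum_eq_zero
  intro l _
  linear_combination (W i k * Z k l * W' l j) * qpow_mul_qpow m hm

lemma qpow_smul_mul (m : ℕ) {r : ℕ} (W Z : Matrix (Fin r) (Fin r) (QuotRing (m+1))) :
    (qpow (m+1) m • W) * Z
      = qpow (m+1) m • (((W * Z).map (ev0 m)).map (algebraMap ℂ (QuotRing (m+1)))) := by
  ext i j
  simp only [Matrix.mul_apply, Matrix.smul_apply, Matrix.map_apply, smul_eq_mul]
  rw [← qpow_mul]
  rw [Finset.mul_sum]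
  exact Finset.sum_congr rfl fun k _ => by ring

lemma smul_norm (m : ℕ) (Y : Matrix (Fin r) (Fin r) (QuotRing (m+1))) :
    qpow (m+1) m • Y
      = qpow (m+1) m • ((Y.map (ev0 m)).map (algebraMap ℂ (QuotRing (m+1)))) := by
  ext i j
  simp only [Matrix.smul_apply, Matrix.map_apply, smul_eq_mul]
  exact qpow_mul m (Y i j)

end S18

open S18 in
set_option maxHeartbeats 1000000 in
/-- if `σ : G → GL_r(ℂ)` and `τ : G → GL_r(ℂ[q]/(q^{m+1}))` satisfy
`τ ≡ σ mod q^m` and `τ` is conjugate to (the constant extension of) `σ` by some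
`A ∈ GL_r(ℂ[q]/(q^{m+1}))`, then they are conjugate by a matrix of the form
`I + q^m M` with `M` a constant complex matrix. -/
theorem conjugating_matrix_normal_form
    (G : Type*) [Group G] (r m : ℕ)
    (σ : G →* GL (Fin r) ℂ)
    (τ : G →* GL (Fin r) (QuotRing (m + 1)))
    (hcongr : ∀ g : G,
      Units.map ((redQuot m).mapMatrix.toMonoidHom) (τ g)
        = Units.map ((algebraMap ℂ (QuotRing m)).mapMatrix.toMonoidHom) (σ g))
    (A : GL (Fin r) (QuotRing (m + 1)))
    (hconj : ∀ g : G, τ g = A * Units.map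
        ((algebraMap ℂ (QuotRing (m + 1))).mapMatrix.toMonoidHom) (σ g) * A⁻¹) :
    ∃ (M : Matrix (Fin r) (Fin r) ℂ) (u : GL (Fin r) (QuotRing (m + 1))),
      (u : Matrix (Fin r) (Fin r) (QuotRing (m + 1)))
        = 1 + qpow (m + 1) m • (M.map (algebraMap ℂ (QuotRing (m + 1)))) ∧
      ∀ g : G, τ g = u * Units.map
        ((algebraMap ℂ (QuotRing (m + 1))).mapMatrix.toMonoidHom) (σ g) * u⁻¹ := by
  classical
  set ι := algebraMap ℂ (QuotRing (m+1)) with hι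
  set Sg : G → GL (Fin r) (QuotRing (m+1)) :=
    fun g => Units.map (ι.mapMatrix.toMonoidHom) (σ g) with hSg
  have hSgval : ∀ g, (Sg g).val = ((σ g).val).map ι := by
    intro g; simp [hSg, Units.coe_map, RingHom.mapMatrix_apply]
  rcases Nat.eq_zero_or_pos m with hm | hm
  · -- m = 0 case : u := A
    subst hm
    refine ⟨(A : Matrix (Fin r) (Fin r) (QuotRing 1)).map (ev0 0) - 1, A, ?_, hconj⟩
    have hq1 : qpow 1 0 = (1 : QuotRing 1) := by
      show mkq 1 (X ^ 0) = 1
      rw [pow_zero, map_one]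
    rw [hq1, one_smul]
    ext i j
    simp only [Matrix.add_apply, Matrix.map_apply, Matrix.sub_apply, Matrix.one_apply, map_sub]
    rw [show ι ((A : Matrix (Fin r) (Fin r) (QuotRing 1)) i j |> ev0 0)
          = (A : Matrix (Fin r) (Fin r) (QuotRing 1)) i j from ev0_section _]
    by_cases h : i = j <;> simp [h]
  · -- m ≥ 1
    -- lift A to a polynomial matrix P
    choose P hP using fun i j => Ideal.Quotient.mk_surjective
      ((A : Matrix (Fin r) (Fin r) (QuotRing (m+1))) i j)
    set Pm : Matrix (Fin r) (Fin r) ℂ[X] := Matrix.of P with hPm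
    have hPA : Pm.map (mkq (m+1)) = (A : Matrix (Fin r) (Fin r) (QuotRing (m+1))) := by
      ext i j; exact hP i j
    -- the σ-matrices
    set σC : G → Matrix (Fin r) (Fin r) ℂ[X] :=
      fun g => ((σ g : Matrix (Fin r) (Fin r) ℂ)).map C with hσC
    have hσι : ∀ g, ((σ g).val).map ι = (σC g).map (mkq (m+1)) := by
      intro g; rw [hσC]; ext i j
      simp only [Matrix.map_apply, Matrix.map_map, Function.comp_apply]
      exact algebraMap_eq _ _
    -- step 1 : the low coefficients of P commute with σ
    have hlow : ∀ g, ∀ t < m, coefM Pm t * (σ g).val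
        = (σ g).val * coefM Pm t := by
      intro g
      apply comm_of_red
      -- reduce the unit equation mod q^m
      have h1 : τ g * A = A * Sg g := by
        rw [hconj g, mul_assoc, mul_assoc, inv_mul_cancel, mul_one]
      have h2 : (τ g).val * A.val = A.val * (Sg g).val := by
        have := congrArg Units.val h1
        rwa [Units.val_mul, Units.val_mul] at this
      have h3 := congrArg (Matrix.map · (redQuot m)) h2
      simp only [Matrix.map_mul] at h3
      -- identify the three reduced matrices
      have hτred : (τ g).val.map (redQuot m)
          = ((σ g).val).map (algebraMap ℂ (QuotRing m)) := by
        have := congrArg Units.val (hcongr g)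
        simpa [Units.coe_map, RingHom.mapMatrix_apply] using this
      have hAred : A.val.map (redQuot m) = Pm.map (mkq m) := by
        rw [← hPA, Matrix.map_map]
        ext i j
        simp only [Matrix.map_apply, Function.comp_apply]
        exact redQuot_mkq m _
      have hSred : (Sg g).val.map (redQuot m)
          = ((σ g).val).map (algebraMap ℂ (QuotRing m)) := by
        rw [hSgval, Matrix.map_map]
        ext i j
        simp only [Matrix.map_apply, Function.comp_apply]
        rw [show ι (((σ g).val) i j) = mkq (m+1) (C (((σ g).val) i j)) from algebraMap_eq _ _,
          redQuot_mkq, ← algebraMap_eq]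
      rw [hτred, hAred, hSred] at h3
      have hσm : ((σ g).val).map (algebraMap ℂ (QuotRing m))
          = (((σ g).val).map C).map (mkq m) := by
        ext i j
        simp only [Matrix.map_apply, Matrix.map_map, Function.comp_apply]
        exact algebraMap_eq _ _
      rw [hσm] at h3
      rw [Matrix.map_mul, Matrix.map_mul]
      exact (h3.symm)
    -- step 2 : B := truncation of P below degree m commutes with σ over ℂ[X]
    set Bp : Matrix (Fin r) (Fin r) ℂ[X] := Pm.map (· %ₘ X ^ m) with hBp
    have hBcomm : ∀ g, Bp * σC g = σC g * Bp := by
      intro g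
      apply mul_map_C_comm
      intro t
      rcases lt_or_ge t m with ht | ht
      · rw [← hBp] at *
        rw [show coefM Bp t = coefM Pm t from coefM_modByMonic_lt Pm m t ht]
        exact hlow g t ht
      · rw [show coefM Bp t = 0 from coefM_modByMonic_ge Pm m t ht, zero_mul, mul_zero]
    set Bmat : Matrix (Fin r) (Fin r) (QuotRing (m+1)) := Bp.map (mkq (m+1)) with hBmat
    have hBcommR : ∀ g, Bmat * (Sg g).val = (Sg g).val * Bmat := by
      intro g
      rw [hSgval, hσι, hBmat, ← Matrix.map_mul, ← Matrix.map_mul, hBcomm g]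
    -- step 3 : decomposition A = Bmat + q^m • W
    set W : Matrix (Fin r) (Fin r) (QuotRing (m+1)) :=
      Pm.map (fun p => mkq (m+1) (p /ₘ X ^ m)) with hW
    have hdecomp : A.val = Bmat + qpow (m+1) m • W := by
      rw [← hPA]
      ext i j
      simp only [Matrix.map_apply, Matrix.add_apply, Matrix.smul_apply, hBmat, hW, smul_eq_mul]
      conv_lhs => rw [← modByMonic_add_div (Pm i j) (X ^ m)]
      rw [map_add, map_mul]
      rfl
    -- step 4 : Bmat is invertible
    set K : Matrix (Fin r) (Fin r) (QuotRing (m+1)) :=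
      (A⁻¹).val * (qpow (m+1) m • W) with hK
    clear_value K
    have hK2 : K * K = 0 := by
      rw [hK, mul_assoc, sandwich m hm, mul_zero]
    have hv1 : (1 - K) * (1 + K) = 1 := by
      rw [sub_mul, one_mul, mul_add, mul_one, hK2, add_zero, add_sub_cancel_right]
    have hv2 : (1 + K) * (1 - K) = 1 := by
      rw [add_mul, one_mul, mul_sub, mul_one, hK2, sub_zero, sub_add_cancel]
    set v : GL (Fin r) (QuotRing (m+1)) := ⟨1 - K, 1 + K, hv1, hv2⟩ with hv
    have hvval : v.val = 1 - K := rfl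
    clear_value v
    set Bu : GL (Fin r) (QuotRing (m+1)) := A * v with hBu
    clear_value Bu
    have hBuval : Bu.val = Bmat := by
      rw [hBu, Units.val_mul, hvval]
      rw [mul_sub, mul_one, hK, ← mul_assoc]
      rw [show A.val * (A⁻¹).val = 1 from A.mul_inv]
      rw [one_mul, hdecomp, add_sub_cancel_right]
    -- Bu commutes with Sg
    have hBuSg : ∀ g, Bu * Sg g = Sg g * Bu := by
      intro g
      apply Units.ext
      rw [Units.val_mul, Units.val_mul, hBuval]
      exact hBcommR g
    -- the conjugating unit
    refine ⟨((W * (Bu⁻¹).val).map (ev0 m)), A * Bu⁻¹, ?_, ?_⟩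
    · -- value of u
      show A.val * (Bu⁻¹).val = _
      rw [hdecomp, add_mul, ← hBuval]
      rw [show Bu.val * (Bu⁻¹).val = 1 from Bu.mul_inv]
      rw [qpow_smul_mul m]
    · intro g
      rw [hconj g]
      have h5 : Bu⁻¹ * Sg g * Bu = Sg g := by
        have hc : Commute Bu (Sg g) := hBuSg g
        rw [hc.inv_left.eq, mul_assoc, inv_mul_cancel, mul_one]
      calc A * Sg g * A⁻¹ = A * (Bu⁻¹ * Sg g * Bu) * A⁻¹ := by rw [h5]
        _ = A * Bu⁻¹ * Sg g * (A * Bu⁻¹)⁻¹ := by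
            rw [mul_inv_rev, inv_inv]; group

end
end
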